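/- A mixed object (X₁,X₂,Φ₁,Φ₂) is isomorphic in mC to m(X) for some object X of C (i.e., is visible) if and only if the mixing map Φ₂ : X₂ → X₁ is an isomorphism. -/

import Mathlib

open CategoryTheory CategoryTheory.Limits

universe v u

variable {C : Type u} [Category.{v} C]

/-- The twisted category `tC` attached to a category `C` with an endomorphism `F` of the
identity functor: objects are pairs `(X, Φ)` with `Φ ≫ Φ = F.app X`. -/
structure Twisted (C : Type u) [Category.{v} C] (F : 𝟭 C ⟶ 𝟭 C) where
  X : C
  tw : X ⟶ X
  tw_tw : tw ≫ tw = F.app X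

namespace Twisted

variable {F : 𝟭 C ⟶ 𝟭 C}

instance : Category (Twisted C F) where
  Hom A B := { f : A.X ⟶ B.X // A.tw ≫ f = f ≫ B.tw }
  id A := ⟨𝟙 A.X, by simp⟩
  comp {A B D} f g := ⟨f.1 ≫ g.1, by
    rw [← Category.assoc, f.2, Category.assoc, g.2, ← Category.assoc]⟩
  id_comp f := Subtype.ext (Category.id_comp _)
  comp_id f := Subtype.ext (Category.comp_id _)
  assoc f g h := Subtype.ext (Category.assoc _ _ _)

end Twisted

/-- The mixed category `mC`: objects are quadruples `(X₁, X₂, φ₁, φ₂)` with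
`φ₁ ≫ φ₂ = F.app X₁` and `φ₂ ≫ φ₁ = F.app X₂`. -/
structure Mixed (C : Type u) [Category.{v} C] (F : 𝟭 C ⟶ 𝟭 C) where
  X₁ : C
  X₂ : C
  φ₁ : X₁ ⟶ X₂
  φ₂ : X₂ ⟶ X₁
  h₁ : φ₁ ≫ φ₂ = F.app X₁
  h₂ : φ₂ ≫ φ₁ = F.app X₂

namespace Mixed

variable {F : 𝟭 C ⟶ 𝟭 C}

instance : Category (Mixed C F) where
  Hom A B := { p : (A.X₁ ⟶ B.X₁) × (A.X₂ ⟶ B.X₂) //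
      A.φ₁ ≫ p.2 = p.1 ≫ B.φ₁ ∧ A.φ₂ ≫ p.1 = p.2 ≫ B.φ₂ }
  id A := ⟨(𝟙 _, 𝟙 _), by simp⟩
  comp {A B D} f g := ⟨(f.1.1 ≫ g.1.1, f.1.2 ≫ g.1.2), by
    constructor
    · rw [← Category.assoc, f.2.1, Category.assoc, g.2.1, ← Category.assoc]
    · rw [← Category.assoc, f.2.2, Category.assoc, g.2.2, ← Category.assoc]⟩
  id_comp f := Subtype.ext (Prod.ext_iff.mpr ⟨Category.id_comp _, Category.id_comp _⟩)
  comp_id f := Subtype.ext (Prod.ext_iff.mpr ⟨Category.comp_id _, Category.comp_id _⟩)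
  assoc f g h := Subtype.ext (Prod.ext_iff.mpr ⟨Category.assoc _ _ _, Category.assoc _ _ _⟩)

end Mixed

/-- The first component functor `comp₁ : mC ⥤ C`. -/
def comp₁ (F : 𝟭 C ⟶ 𝟭 C) : Mixed C F ⥤ C where
  obj A := A.X₁
  map f := f.1.1
  map_id _ := rfl
  map_comp _ _ := rfl

/-- The second component functor `comp₂ : mC ⥤ C`. -/
def comp₂ (F : 𝟭 C ⟶ 𝟭 C) : Mixed C F ⥤ C where
  obj A := A.X₂
  map f := f.1.2
  map_id _ := rfl
  map_comp _ _ := rfl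

/-- The mixing functor `m : C ⥤ mC`, `X ↦ (X, X, F_X, id_X)`. -/
def mixM (F : 𝟭 C ⟶ 𝟭 C) : C ⥤ Mixed C F where
  obj X := ⟨X, X, F.app X, 𝟙 X, by simp, by simp⟩
  map {X Y} f := ⟨(f, f), by
    constructor
    · simpa using (F.naturality f).symm
    · simp⟩
  map_id _ := rfl
  map_comp _ _ := rfl

/-- The anti-mixing functor `m̄ : C ⥤ mC`, `X ↦ (X, X, id_X, F_X)`. -/
def mixMbar (F : 𝟭 C ⟶ 𝟭 C) : C ⥤ Mixed C F where
  obj X := ⟨X, X, 𝟙 X, F.app X, by simp, by simp⟩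
  map {X Y} f := ⟨(f, f), by
    constructor
    · simp
    · simpa using (F.naturality f).symm⟩
  map_id _ := rfl
  map_comp _ _ := rfl

/-- The twisting functor `τ* : mC ⥤ mC`, swapping the two halves of a mixed object. -/
def tau (F : 𝟭 C ⟶ 𝟭 C) : Mixed C F ⥤ Mixed C F where
  obj A := ⟨A.X₂, A.X₁, A.φ₂, A.φ₁, A.h₂, A.h₁⟩
  map f := ⟨(f.1.2, f.1.1), ⟨f.2.2, f.2.1⟩⟩
  map_id _ := rfl
  map_comp _ _ := rfl

/-- The twixing functor `δ* : tC ⥤ mC`, `(X, Φ) ↦ (X, X, Φ, Φ)`. -/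
def deltaStar (F : 𝟭 C ⟶ 𝟭 C) : Twisted C F ⥤ Mixed C F where
  obj A := ⟨A.X, A.X, A.tw, A.tw, A.tw_tw, A.tw_tw⟩
  map f := ⟨(f.1, f.1), ⟨f.2, f.2⟩⟩
  map_id _ := rfl
  map_comp _ _ := rfl

/-- A mixed object `(X₁, X₂, Φ₁, Φ₂)` is visible (isomorphic to `m X` for some
ordinary object `X`) if and only if the mixing map `Φ₂ : X₂ ⟶ X₁` is an isomorphism. -/
theorem visible_iff_isIso {C : Type u} [Category.{v} C] (F : 𝟭 C ⟶ 𝟭 C) (A : Mixed C F) :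
    (∃ X : C, Nonempty (A ≅ (mixM F).obj X)) ↔ IsIso A.φ₂ := by
  constructor
  · rintro ⟨X, ⟨e⟩⟩
    set f₁ := e.hom.1.1 with hf1
    set f₂ := e.hom.1.2 with hf2
    set g₁ := e.inv.1.1 with hg1
    set g₂ := e.inv.1.2 with hg2
    have h11 : f₁ ≫ g₁ = 𝟙 _ := congrArg (fun p => p.1.1) e.hom_inv_id
    have h22 : f₂ ≫ g₂ = 𝟙 _ := congrArg (fun p => p.1.2) e.hom_inv_id
    have k11 : g₁ ≫ f₁ = 𝟙 _ := congrArg (fun p => p.1.1) e.inv_hom_id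
    have k22 : g₂ ≫ f₂ = 𝟙 _ := congrArg (fun p => p.1.2) e.inv_hom_id
    have hphi : A.φ₂ = f₂ ≫ g₁ := by
      have : A.φ₂ ≫ f₁ = f₂ := by simpa [mixM] using e.hom.2.2
      erw [← this, Category.assoc, h11, Category.comp_id]
    refine ⟨f₁ ≫ g₂, ?_, ?_⟩
    · erw [hphi, Category.assoc, ← Category.assoc g₁, k11, Category.id_comp, h22]
    · erw [hphi, Category.assoc, ← Category.assoc g₂, k22, Category.id_comp, h11]
  · intro h
    refine ⟨A.X₁, ⟨⟨⟨(𝟙 A.X₁, A.φ₂), ?_, ?_⟩, ⟨(𝟙 A.X₁, @inv _ _ _ _ A.φ₂ h), ?_, ?_⟩, ?_, ?_⟩⟩⟩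
    · simpa [mixM] using A.h₁
    · simp [mixM]
    · simp only [mixM, Category.id_comp]
      rw [← A.h₁, Category.assoc, IsIso.hom_inv_id, Category.comp_id]
    · simp [mixM]
    · apply Subtype.ext
      exact Prod.ext (Category.comp_id _) (@IsIso.hom_inv_id _ _ _ _ A.φ₂ h)
    · apply Subtype.ext
      exact Prod.ext (Category.comp_id _) (@IsIso.inv_hom_id _ _ _ _ A.φ₂ h)
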